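/- Let S ⊆ ℝ^n be bounded and μ₀ > 0. Then the set { p_μ(x) : x ∈ S, μ ≥ μ₀ } is bounded. -/

import Mathlib

/-- If `S ⊆ ℝ^n` is bounded and `μ₀ > 0`, then the set
`{ p_μ(x) : x ∈ S, μ ≥ μ₀ }` is bounded. -/

lemma aux_affine_lb {m : ℕ} (g : EuclideanSpace ℝ (Fin m) → ℝ)
    (hg : ConvexOn ℝ Set.univ g) (hgc : Continuous g) :
    ∃ c > (0:ℝ), ∀ v, -(c * ‖v‖) - c ≤ g v := by
  obtain ⟨C, hC⟩ := (isCompact_closedBall (0:EuclideanSpace ℝ (Fin m)) 1).exists_bound_of_continuousOn hgc.continuousOn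
  have hC0 : 0 ≤ C := le_trans (norm_nonneg _) (hC 0 (by simp))
  refine ⟨2*C+1, by linarith, fun v => ?_⟩
  by_cases hv : ‖v‖ ≤ 1
  · have := hC v (by simpa [Metric.mem_closedBall, dist_eq_norm] using hv)
    have h1 : -C ≤ g v := by
      have := abs_le.mp (by simpa using this)
      linarith [this.1]
    nlinarith [norm_nonneg v]
  · push_neg at hv
    set r := ‖v‖ with hr
    have hr0 : 0 < r := by linarith
    have hu : ‖r⁻¹ • v‖ = 1 := by
      rw [norm_smul, Real.norm_eq_abs, abs_inv, abs_of_pos hr0]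
      field_simp
      exact hr.symm
    have hab : r⁻¹ + (1 - r⁻¹) = 1 := by ring
    have hb : (0:ℝ) ≤ 1 - r⁻¹ := by
      have : r⁻¹ ≤ 1 := by
        rw [inv_le_one_iff₀]; right; linarith
      linarith
    have hcvx := hg.2 (Set.mem_univ v) (Set.mem_univ 0)
      (show (0:ℝ) ≤ r⁻¹ by positivity) hb hab
    rw [smul_eq_mul, smul_eq_mul] at hcvx
    rw [smul_zero, add_zero] at hcvx
    have hgu : -C ≤ g (r⁻¹ • v) := by
      have := abs_le.mp (by simpa using hC (r⁻¹ • v) (by simp [Metric.mem_closedBall, dist_eq_norm, hu]))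
      linarith [this.1]
    have hg0 := abs_le.mp (by simpa using hC 0 (by simp))
    have hinv : r * r⁻¹ = 1 := mul_inv_cancel₀ (ne_of_gt hr0)
    have key : r * g (r⁻¹ • v) ≤ g v + (r - 1) * g 0 := by
      calc r * g (r⁻¹ • v) ≤ r * (r⁻¹ * g v + (1 - r⁻¹) * g 0) :=
            mul_le_mul_of_nonneg_left hcvx hr0.le
        _ = (r * r⁻¹) * g v + (r * 1 - r * r⁻¹) * g 0 := by ring
        _ = g v + (r - 1) * g 0 := by rw [hinv]; ring
    nlinarith [key, mul_nonneg hr0.le (by linarith : (0:ℝ) ≤ g (r⁻¹ • v) + C),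
      mul_nonneg (by linarith : (0:ℝ) ≤ r - 1) (by linarith [hg0.2] : (0:ℝ) ≤ C - g 0)]


theorem stmt_8 {n m : ℕ}
    (F : EuclideanSpace ℝ (Fin n) → EuclideanSpace ℝ (Fin m))
    (g : EuclideanSpace ℝ (Fin m) → ℝ)
    (D : Set (EuclideanSpace ℝ (Fin n)))
    (hF : ContDiff ℝ 2 F)
    (hg : ConvexOn ℝ Set.univ g) (hgc : Continuous g)
    (hDne : D.Nonempty) (hDcl : IsClosed D) (hDcv : Convex ℝ D)
    (p : ℝ → EuclideanSpace ℝ (Fin n) → EuclideanSpace ℝ (Fin n))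
    (hp : ∀ μ, 0 < μ → ∀ x, p μ x ∈ D ∧ ∀ z ∈ D,
      g (F x + fderiv ℝ F x (p μ x - x)) + μ / 2 * ‖p μ x - x‖ ^ 2 ≤
      g (F x + fderiv ℝ F x (z - x)) + μ / 2 * ‖z - x‖ ^ 2)
    (S : Set (EuclideanSpace ℝ (Fin n))) (hS : Bornology.IsBounded S)
    (μ₀ : ℝ) (hμ₀ : 0 < μ₀) :
    Bornology.IsBounded {y | ∃ x ∈ S, ∃ μ, μ₀ ≤ μ ∧ y = p μ x} := by
  obtain ⟨z₀, hz₀⟩ := hDne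
  -- affine lower bound on g
  obtain ⟨c, hc0, hcg⟩ := aux_affine_lb g hg hgc
  -- bound on S
  obtain ⟨R₀', hR₀'⟩ := isBounded_iff_forall_norm_le.mp hS
  set R₀ : ℝ := max R₀' 0 with hR₀def
  have hR₀ : ∀ x ∈ S, ‖x‖ ≤ R₀ := fun x hx => le_trans (hR₀' x hx) (le_max_left _ _)
  have hR₀0 : 0 ≤ R₀ := le_max_right _ _
  -- bounds on F and its derivative on the closure of S
  have hKcpt : IsCompact (closure S) := hS.isCompact_closure
  obtain ⟨MF, hMF⟩ := hKcpt.exists_bound_of_continuousOn hF.continuous.continuousOn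
  obtain ⟨MA, hMA⟩ := hKcpt.exists_bound_of_continuousOn
    ((hF.continuous_fderiv (by norm_num)).continuousOn
      (s := closure S) (f := fun x => fderiv ℝ F x))
  -- bound on g on a big ball
  set MF' := max MF 0 with hMF'
  set MA' := max MA 0 with hMA'
  have hMF'0 : 0 ≤ MF' := le_max_right _ _
  have hMA'0 : 0 ≤ MA' := le_max_right _ _
  have hMFle : MF ≤ MF' := le_max_left _ _
  have hMAle : MA ≤ MA' := le_max_left _ _
  set R : ℝ := ‖z₀‖ + R₀ with hRdef
  have hR0 : 0 ≤ R := by positivity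
  set ρ : ℝ := MF' + MA' * R with hρ
  have hρ0 : 0 ≤ ρ := by positivity
  obtain ⟨Mg, hMg⟩ := (isCompact_closedBall (0:EuclideanSpace ℝ (Fin m)) ρ).exists_bound_of_continuousOn hgc.continuousOn
  have hMg0 : 0 ≤ Mg := le_trans (norm_nonneg _) (hMg 0 (by simp [hρ0]))
  set C0 : ℝ := Mg + c * MF' + c with hC0
  have hC0' : 0 ≤ C0 := by positivity
  set Q : ℝ := 2 * (c * MA') / μ₀ with hQ
  have hQ0 : 0 ≤ Q := by positivity
  set P : ℝ := R ^ 2 + 2 * C0 / μ₀ with hP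
  have hP0 : 0 ≤ P := by positivity
  set T : ℝ := max R (max 1 (P + Q)) with hT
  have hRT : R ≤ T := le_max_left _ _
  have h1T : (1:ℝ) ≤ T := le_trans (le_max_left _ _) (le_max_right _ _)
  have hPQT : P + Q ≤ T := le_trans (le_max_right _ _) (le_max_right _ _)
  clear_value R₀ MF' MA' R ρ C0 Q P T
  rw [isBounded_iff_forall_norm_le]
  refine ⟨R₀ + T, ?_⟩
  rintro y ⟨x, hxS, μ, hμ, rfl⟩
  have hμpos : 0 < μ := lt_of_lt_of_le hμ₀ hμ
  obtain ⟨hpD, hopt⟩ := hp μ hμpos x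
  have hkey := hopt z₀ hz₀
  have hxcl : x ∈ closure S := subset_closure hxS
  have hxn : ‖x‖ ≤ R₀ := hR₀ x hxS
  have hFx : ‖F x‖ ≤ MF' := le_trans (hMF x hxcl) hMFle
  have hAx : ‖fderiv ℝ F x‖ ≤ MA' := le_trans (hMA x hxcl) hMAle
  set t : ℝ := ‖p μ x - x‖ with ht
  have ht0 : 0 ≤ t := norm_nonneg _
  have hz0x : ‖z₀ - x‖ ≤ R := by
    calc ‖z₀ - x‖ ≤ ‖z₀‖ + ‖x‖ := norm_sub_le _ _
      _ ≤ R := by simp [hRdef]; linarith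
  set G1 : ℝ := g (F x + fderiv ℝ F x (p μ x - x)) with hG1
  set G2 : ℝ := g (F x + fderiv ℝ F x (z₀ - x)) with hG2
  -- upper bound for rhs g term
  have hrhsg : G2 ≤ Mg := by
    rw [hG2]
    have hmem : F x + fderiv ℝ F x (z₀ - x) ∈ Metric.closedBall (0:EuclideanSpace ℝ (Fin m)) ρ := by
      rw [Metric.mem_closedBall, dist_zero_right, hρ]
      calc ‖F x + fderiv ℝ F x (z₀ - x)‖ ≤ ‖F x‖ + ‖fderiv ℝ F x (z₀ - x)‖ := norm_add_le _ _
        _ ≤ MF' + MA' * R := by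
            have h1 : ‖fderiv ℝ F x (z₀ - x)‖ ≤ MA' * R := by
              calc ‖fderiv ℝ F x (z₀ - x)‖ ≤ ‖fderiv ℝ F x‖ * ‖z₀ - x‖ :=
                    (fderiv ℝ F x).le_opNorm _
                _ ≤ MA' * R := mul_le_mul hAx hz0x (norm_nonneg _) hMA'0
            linarith
    have h := hMg _ hmem
    rw [Real.norm_eq_abs] at h
    exact (abs_le.mp h).2
  -- lower bound for lhs g term
  have hlhsg : -(c * MF' + c * MA' * t) - c ≤ G1 := by
    rw [hG1]
    have hn : ‖F x + fderiv ℝ F x (p μ x - x)‖ ≤ MF' + MA' * t := by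
      calc ‖F x + fderiv ℝ F x (p μ x - x)‖ ≤ ‖F x‖ + ‖fderiv ℝ F x (p μ x - x)‖ := norm_add_le _ _
        _ ≤ MF' + MA' * t := by
            have h1 : ‖fderiv ℝ F x (p μ x - x)‖ ≤ MA' * t := by
              calc ‖fderiv ℝ F x (p μ x - x)‖ ≤ ‖fderiv ℝ F x‖ * ‖p μ x - x‖ :=
                    (fderiv ℝ F x).le_opNorm _
                _ ≤ MA' * t := mul_le_mul_of_nonneg_right hAx ht0
            linarith
    have h2 := mul_le_mul_of_nonneg_left hn hc0.le
    have h3 : c * (MF' + MA' * t) = c * MF' + c * MA' * t := by ring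
    have h4 := hcg (F x + fderiv ℝ F x (p μ x - x))
    linarith
  clear_value t G1 G2
  -- main inequality on t
  have hmain : μ / 2 * t ^ 2 ≤ C0 + c * MA' * t + μ / 2 * R ^ 2 := by
    have hRsq : ‖z₀ - x‖ ^ 2 ≤ R ^ 2 := pow_le_pow_left₀ (norm_nonneg _) hz0x 2
    have h2 : μ / 2 * ‖z₀ - x‖ ^ 2 ≤ μ / 2 * R ^ 2 :=
      mul_le_mul_of_nonneg_left hRsq (by positivity)
    have hC0eq : C0 = Mg + c * MF' + c := hC0
    linarith [hkey, hlhsg, hrhsg, h2]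
  -- conclude t ≤ T
  have htT : t ≤ T := by
    by_cases hcase : t ≤ R
    · exact le_trans hcase hRT
    · push_neg at hcase
      by_contra hgt
      push_neg at hgt
      -- from hmain and μ ≥ μ₀ :
      have hsq : (0:ℝ) ≤ t ^ 2 - R ^ 2 :=
        sub_nonneg.mpr (pow_le_pow_left₀ hR0 hcase.le 2)
      have h3 : μ₀ / 2 * (t ^ 2 - R ^ 2) ≤ μ / 2 * (t ^ 2 - R ^ 2) :=
        mul_le_mul_of_nonneg_right (by linarith) hsq
      have hexp : μ / 2 * (t ^ 2 - R ^ 2) = μ / 2 * t ^ 2 - μ / 2 * R ^ 2 := by ring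
      have h4 : μ₀ / 2 * (t ^ 2 - R ^ 2) ≤ C0 + c * MA' * t := by
        linarith [h3, hexp, hmain]
      -- so t^2 ≤ P + Q t
      have h5 : t ^ 2 ≤ P + Q * t := by
        have hμ2 : (0:ℝ) < μ₀ / 2 := by linarith
        have h4' : t ^ 2 - R ^ 2 ≤ (C0 + c * MA' * t) / (μ₀ / 2) :=
          (le_div_iff₀' hμ2).mpr h4
        have heq : (C0 + c * MA' * t) / (μ₀ / 2) = 2 * C0 / μ₀ + 2 * (c * MA') / μ₀ * t := by
          field_simp
        rw [hP, hQ]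
        rw [heq] at h4'
        linarith
      -- contradiction: t > max 1 (P+Q) so t^2 > P + Q t
      have h6 : t > 1 := lt_of_le_of_lt h1T hgt
      have h7 : t > P + Q := lt_of_le_of_lt hPQT hgt
      have h8 : (P + Q) * t < t * t := mul_lt_mul_of_pos_right h7 (by linarith)
      have hPt : P ≤ P * t := le_mul_of_one_le_right hP0 (by linarith)
      have h9 : (P + Q) * t = P * t + Q * t := by ring
      have h10 : t * t = t ^ 2 := (sq t).symm
      linarith
  calc ‖p μ x‖ = ‖x + (p μ x - x)‖ := by rw [add_sub_cancel]
    _ ≤ ‖x‖ + ‖p μ x - x‖ := norm_add_le _ _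
    _ ≤ R₀ + T := add_le_add hxn (ht ▸ htT)
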